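/- Let M ≥ 4 be an even integer. Let S^(0) ∈ ℝ^{M×M} be the matrix obtained from the modified DST matrix S by replacing its row of index 1 with the vector v ∈ ℝ^M with entries v_n = (1/√M)·(−1)^n. Then rank(S^(0)) = M, i.e., S^(0) is invertible. -/

import Mathlib

/-- The modified DST matrix `S ∈ ℝ^{M×M}` (row 0 replaced by the constant row `√(1/M)`). -/
noncomputable def modDstMat (M : ℕ) : Matrix (Fin M) (Fin M) ℝ :=
  Matrix.of fun k n =>
    if (k : ℕ) = 0 then Real.sqrt (1 / M)
    else Real.sqrt (2 / M) * Real.sin (Real.pi / M * (k : ℕ) * ((n : ℕ) + 1 / 2))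

/-- The sine rows. -/
noncomputable def rdstS (M j n : ℕ) : ℝ :=
  Real.sin (Real.pi / M * j * ((n : ℝ) + 1 / 2))


/-- Telescoping identity for sums of cosines at half-integer multiples. -/
lemma rdst_tele (x : ℝ) (M : ℕ) :
    2 * Real.sin (x / 2) * ∑ n ∈ Finset.range M, Real.cos (((n : ℝ) + 1 / 2) * x)
      = Real.sin ((M : ℝ) * x) := by
  induction M with
  | zero => simp
  | succ m ih =>
    rw [Finset.sum_range_succ]
    have e1 : ((m : ℝ) + 1) * x = ((m : ℝ) + 1 / 2) * x + x / 2 := by ring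
    have e2 : (m : ℝ) * x = ((m : ℝ) + 1 / 2) * x - x / 2 := by ring
    have h1 := Real.sin_add (((m : ℝ) + 1 / 2) * x) (x / 2)
    have h2 := Real.sin_sub (((m : ℝ) + 1 / 2) * x) (x / 2)
    push_cast
    rw [e1, h1]
    rw [e2, h2] at ih
    linarith [ih]

lemma rdst_sum_cos_zero {M : ℕ} (hM : 0 < M) (m : ℤ) (h : ¬ ((2 * (M : ℤ)) ∣ m)) :
    ∑ n ∈ Finset.range M, Real.cos (((n : ℝ) + 1 / 2) * (Real.pi * (m : ℝ) / (M : ℝ))) = 0 := by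
  have hM0 : (M : ℝ) ≠ 0 := Nat.cast_ne_zero.mpr hM.ne'
  have htele := rdst_tele (Real.pi * (m : ℝ) / (M : ℝ)) M
  have hMx : (M : ℝ) * (Real.pi * (m : ℝ) / (M : ℝ)) = (m : ℝ) * Real.pi := by
    field_simp
  rw [hMx, Real.sin_int_mul_pi] at htele
  have hs : Real.sin ((Real.pi * (m : ℝ) / (M : ℝ)) / 2) ≠ 0 := by
    intro h0
    rw [Real.sin_eq_zero_iff] at h0
    obtain ⟨n, hn⟩ := h0
    apply h
    refine ⟨n, ?_⟩
    have : (m : ℝ) = ((2 * (M : ℤ) * n : ℤ) : ℝ) := by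
      push_cast
      have hpi := Real.pi_ne_zero
      field_simp at hn
      have h2 : Real.pi * ((n : ℝ) * ((M : ℝ) * 2)) = Real.pi * (m : ℝ) := by
        rw [← hn]; ring
      have := mul_left_cancel₀ hpi h2
      linarith [this]
    exact_mod_cast this
  have := mul_eq_zero.mp htele
  rcases this with h' | h'
  · rcases mul_eq_zero.mp h' with h'' | h''
    · norm_num at h''
    · exact absurd h'' hs
  · exact h'

lemma rdst_prod_to_sum (a b : ℝ) :
    Real.sin a * Real.sin b = (Real.cos (a - b) - Real.cos (a + b)) / 2 := by
  rw [Real.cos_sub, Real.cos_add]; ring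

lemma rdst_not_dvd {M : ℕ} (d : ℤ) (hd : d ≠ 0) (hd' : d.natAbs < 2 * M) :
    ¬ ((2 * (M : ℤ)) ∣ d) := by
  rintro ⟨c, rfl⟩
  have : (2 * (M : ℤ) * c).natAbs = 2 * M * c.natAbs := by
    rw [Int.natAbs_mul]
    norm_num [Int.natAbs_mul]
  rw [this] at hd'
  have hc : c.natAbs ≠ 0 := by
    intro h0
    apply hd
    simp [Int.natAbs_eq_zero.mp h0]
  nlinarith [Nat.one_le_iff_ne_zero.mpr hc]

/-- Orthogonality of distinct sine rows. -/
lemma rdst_sin_orth {M : ℕ} (hM : 0 < M) (k l : ℕ) (hk : 1 ≤ k) (hk' : k ≤ M)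
    (hl : 1 ≤ l) (hl' : l ≤ M) (hne : k ≠ l) :
    ∑ n ∈ Finset.range M,
      Real.sin (Real.pi / M * k * ((n : ℝ) + 1 / 2)) *
        Real.sin (Real.pi / M * l * ((n : ℝ) + 1 / 2)) = 0 := by
  have hM0 : (M : ℝ) ≠ 0 := Nat.cast_ne_zero.mpr hM.ne'
  have key : ∀ n ∈ Finset.range M,
      Real.sin (Real.pi / M * k * ((n : ℝ) + 1 / 2)) *
        Real.sin (Real.pi / M * l * ((n : ℝ) + 1 / 2)) =
      (Real.cos (((n : ℝ) + 1 / 2) * (Real.pi * ((k : ℤ) - (l : ℤ) : ℤ) / M)) -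
        Real.cos (((n : ℝ) + 1 / 2) * (Real.pi * ((k : ℤ) + (l : ℤ) : ℤ) / M))) / 2 := by
    intro n _
    rw [rdst_prod_to_sum]
    congr 2
    · push_cast; field_simp
    · push_cast; field_simp
  rw [Finset.sum_congr rfl key]
  rw [← Finset.sum_div, Finset.sum_sub_distrib]
  rw [rdst_sum_cos_zero hM _ (rdst_not_dvd _ (by omega) (by omega)),
      rdst_sum_cos_zero hM _ (rdst_not_dvd _ (by omega) (by omega))]
  norm_num

/-- Norm of sine rows `1 ≤ k < M`. -/
lemma rdst_sin_norm {M : ℕ} (k : ℕ) (hk : 1 ≤ k) (hk' : k < M) :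
    ∑ n ∈ Finset.range M,
      Real.sin (Real.pi / M * k * ((n : ℝ) + 1 / 2)) *
        Real.sin (Real.pi / M * k * ((n : ℝ) + 1 / 2)) = M / 2 := by
  have hM : 0 < M := by omega
  have hM0 : (M : ℝ) ≠ 0 := Nat.cast_ne_zero.mpr hM.ne'
  have key : ∀ n ∈ Finset.range M,
      Real.sin (Real.pi / M * k * ((n : ℝ) + 1 / 2)) *
        Real.sin (Real.pi / M * k * ((n : ℝ) + 1 / 2)) =
      (1 - Real.cos (((n : ℝ) + 1 / 2) * (Real.pi * ((2 * k : ℤ) : ℝ) / M))) / 2 := by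
    intro n _
    rw [rdst_prod_to_sum]
    congr 2
    · simp [sub_self]
    · push_cast; field_simp; ring
  rw [Finset.sum_congr rfl key, ← Finset.sum_div, Finset.sum_sub_distrib]
  rw [rdst_sum_cos_zero hM _ (rdst_not_dvd _ (by omega) (by omega))]
  simp

/-- The first sine row has positive sum. -/
lemma rdst_sin_one_pos {M : ℕ} (hM : 0 < M) :
    0 < ∑ n ∈ Finset.range M, Real.sin (Real.pi / M * 1 * ((n : ℝ) + 1 / 2)) := by
  apply Finset.sum_pos
  · intro n hn
    apply Real.sin_pos_of_pos_of_lt_pi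
    · have : (0 : ℝ) < (n : ℝ) + 1 / 2 := by positivity
      have hMpos : (0 : ℝ) < (M : ℝ) := by exact_mod_cast hM
      positivity
    · have hn' : (n : ℝ) + 1 / 2 < M := by
        have : n < M := Finset.mem_range.mp hn
        have : (n : ℝ) + 1 ≤ (M : ℝ) := by exact_mod_cast this
        linarith
      have hMpos : (0 : ℝ) < (M : ℝ) := by exact_mod_cast hM
      calc Real.pi / M * 1 * ((n : ℝ) + 1 / 2) < Real.pi / M * 1 * M := by
            apply mul_lt_mul_of_pos_left hn'
            positivity
        _ = Real.pi := by field_simp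
  · exact Finset.nonempty_range_iff.mpr hM.ne'

/-- The `k = M` sine row is the alternating vector. -/
lemma rdst_sin_alt {M : ℕ} (hM : 0 < M) (n : ℕ) :
    Real.sin (Real.pi / M * M * ((n : ℝ) + 1 / 2)) = (-1 : ℝ) ^ n := by
  have hM0 : (M : ℝ) ≠ 0 := Nat.cast_ne_zero.mpr hM.ne'
  have : Real.pi / M * M * ((n : ℝ) + 1 / 2) = (n : ℝ) * Real.pi + Real.pi / 2 := by
    field_simp
  rw [this, Real.sin_add_pi_div_two]
  have := Real.cos_nat_mul_pi_sub 0 n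
  simpa using this

lemma rdst_sin_orth' {M : ℕ} (hM : 0 < M) (k l : ℕ) (hk : 1 ≤ k) (hk' : k ≤ M)
    (hl : 1 ≤ l) (hl' : l ≤ M) (hne : k ≠ l) :
    ∑ n ∈ Finset.range M, rdstS M k n * rdstS M l n = 0 :=
  rdst_sin_orth hM k l hk hk' hl hl' hne

lemma rdst_sin_norm' {M : ℕ} (k : ℕ) (hk : 1 ≤ k) (hk' : k < M) :
    ∑ n ∈ Finset.range M, rdstS M k n * rdstS M k n = M / 2 :=
  rdst_sin_norm k hk hk'

lemma rdst_sin_one_pos' {M : ℕ} (hM : 0 < M) : 0 < ∑ n ∈ Finset.range M, rdstS M 1 n := by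
  simpa [rdstS] using rdst_sin_one_pos hM

lemma rdst_sin_alt' {M : ℕ} (hM : 0 < M) (n : ℕ) : rdstS M M n = (-1 : ℝ) ^ n :=
  rdst_sin_alt hM n


/-- Section V-A: replacing row 1 of `S` by the alternating vector
`v_n = (1/√M)·(−1)ⁿ` yields a full-rank (invertible) matrix `S^(0)`. -/
theorem modDst_replacedRowOne_fullRank (M : ℕ) (hM : 4 ≤ M) (hEven : Even M) :
    ((modDstMat M).updateRow ⟨1, by omega⟩
        (fun n => 1 / Real.sqrt M * (-1 : ℝ) ^ (n : ℕ))).rank = M := by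
  have hMpos : 0 < M := by omega
  have hMR : (0 : ℝ) < (M : ℝ) := by exact_mod_cast hMpos
  set A := ((modDstMat M).updateRow ⟨1, by omega⟩
      (fun n => 1 / Real.sqrt M * (-1 : ℝ) ^ (n : ℕ))) with hAdef
  have hA : ∀ i n : Fin M, A i n =
      if (i : ℕ) = 1 then 1 / Real.sqrt M * (-1 : ℝ) ^ (n : ℕ)
      else if (i : ℕ) = 0 then Real.sqrt (1 / M)
      else Real.sqrt (2 / M) * rdstS M i n := by
    intro i n
    rw [hAdef, Matrix.updateRow_apply]
    by_cases h1 : i = ⟨1, by omega⟩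
    · simp [h1]
    · have hne : (i : ℕ) ≠ 1 := fun h => h1 (Fin.ext h)
      simp [h1, hne, modDstMat, rdstS]
  have hdet : A.det ≠ 0 := by
    intro hd0
    obtain ⟨a, ha0, ha⟩ := Matrix.exists_vecMul_eq_zero_iff.mpr hd0
    apply ha0
    -- key identity
    have key : ∀ j : ℕ,
        ∑ i : Fin M, a i * ∑ n : Fin M, A i n * rdstS M j (n : ℕ) = 0 := by
      intro j
      have h1 : ∀ n : Fin M, ∑ i : Fin M, a i * A i n = 0 := by
        intro n
        have := congrFun ha n
        simpa [Matrix.vecMul, dotProduct] using this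
      calc ∑ i : Fin M, a i * ∑ n : Fin M, A i n * rdstS M j (n : ℕ)
          = ∑ n : Fin M, (∑ i : Fin M, a i * A i n) * rdstS M j (n : ℕ) := by
            simp_rw [Finset.mul_sum]
            rw [Finset.sum_comm]
            simp_rw [Finset.sum_mul]
            exact Finset.sum_congr rfl fun n _ => Finset.sum_congr rfl fun i _ => by ring
        _ = 0 := by simp [h1]
    -- vanishing of off-diagonal inner sums
    have hWzero : ∀ b : Fin M, (b : ℕ) ≠ 0 → ∀ j : ℕ, 1 ≤ j → j ≤ M →
        j ≠ (if (b : ℕ) = 1 then M else (b : ℕ)) →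
        ∑ n : Fin M, A b n * rdstS M j (n : ℕ) = 0 := by
      intro b hb0 j hj1 hjM hjne
      by_cases hb1 : (b : ℕ) = 1
      · rw [if_pos hb1] at hjne
        have : ∀ n : Fin M, A b n * rdstS M j (n : ℕ) =
            1 / Real.sqrt M * (rdstS M M (n : ℕ) * rdstS M j (n : ℕ)) := by
          intro n
          rw [hA, if_pos hb1, ← rdst_sin_alt' hMpos (n : ℕ)]
          ring
        rw [Finset.sum_congr rfl fun n _ => this n, ← Finset.mul_sum,
          Fin.sum_univ_eq_sum_range (fun n => rdstS M M n * rdstS M j n),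
          rdst_sin_orth' hMpos M j (by omega) le_rfl hj1 hjM (fun h => hjne h.symm),
          mul_zero]
      · rw [if_neg hb1] at hjne
        have hb2 : 2 ≤ (b : ℕ) := by omega
        have hbM : (b : ℕ) < M := b.isLt
        have : ∀ n : Fin M, A b n * rdstS M j (n : ℕ) =
            Real.sqrt (2 / M) * (rdstS M (b : ℕ) (n : ℕ) * rdstS M j (n : ℕ)) := by
          intro n
          rw [hA, if_neg hb1, if_neg hb0]
          ring
        rw [Finset.sum_congr rfl fun n _ => this n, ← Finset.mul_sum,
          Fin.sum_univ_eq_sum_range (fun n => rdstS M (b : ℕ) n * rdstS M j n),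
          rdst_sin_orth' hMpos (b : ℕ) j (by omega) (by omega) hj1 hjM
            (fun h => hjne h.symm),
          mul_zero]
    -- a 0 = 0
    have h0 : a ⟨0, by omega⟩ = 0 := by
      have k1 := key 1
      rw [Finset.sum_eq_single (⟨0, by omega⟩ : Fin M)] at k1
      · have hW : ∑ n : Fin M, A ⟨0, by omega⟩ n * rdstS M 1 (n : ℕ) =
            Real.sqrt (1 / M) * ∑ n ∈ Finset.range M, rdstS M 1 n := by
          rw [← Fin.sum_univ_eq_sum_range (fun n => rdstS M 1 n), Finset.mul_sum]
          exact Finset.sum_congr rfl fun n _ => by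
            rw [hA]; norm_num
        rw [hW] at k1
        have hWne : Real.sqrt (1 / M) * ∑ n ∈ Finset.range M, rdstS M 1 n ≠ 0 := by
          have h1 : (0:ℝ) < Real.sqrt (1 / M) := Real.sqrt_pos.mpr (by positivity)
          have h2 := rdst_sin_one_pos' (M := M) hMpos
          positivity
        exact (mul_eq_zero.mp k1).resolve_right hWne
      · intro b _ hb
        have hb0 : (b : ℕ) ≠ 0 := fun h => hb (Fin.ext h)
        rw [hWzero b hb0 1 le_rfl (by omega) (by split <;> omega), mul_zero]
      · intro h; exact absurd (Finset.mem_univ _) h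
    -- a 1 = 0
    have h1 : a ⟨1, by omega⟩ = 0 := by
      have kM := key M
      rw [Finset.sum_eq_single (⟨1, by omega⟩ : Fin M)] at kM
      · have hW : ∑ n : Fin M, A ⟨1, by omega⟩ n * rdstS M M (n : ℕ) =
            1 / Real.sqrt M * M := by
          have : ∀ n : Fin M, A ⟨1, by omega⟩ n * rdstS M M (n : ℕ) =
              1 / Real.sqrt M := by
            intro n
            rw [hA, rdst_sin_alt' hMpos]
            have he : ((-1:ℝ)) ^ (n:ℕ) * (-1:ℝ) ^ (n:ℕ) = 1 := by
              rw [← pow_add]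
              exact Even.neg_one_pow ⟨(n:ℕ), rfl⟩
            rw [if_pos (show ((⟨1, by omega⟩ : Fin M) : ℕ) = 1 from rfl), mul_assoc, he, mul_one]
          rw [Finset.sum_congr rfl fun n _ => this n]
          simp [mul_comm]
        rw [hW] at kM
        have hWne : 1 / Real.sqrt M * (M : ℝ) ≠ 0 := by
          have : (0:ℝ) < Real.sqrt M := Real.sqrt_pos.mpr hMR
          positivity
        exact (mul_eq_zero.mp kM).resolve_right hWne
      · intro b _ hb
        by_cases hb0 : (b : ℕ) = 0
        · have : b = ⟨0, by omega⟩ := Fin.ext hb0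
          rw [this, h0, zero_mul]
        · have hb1 : (b : ℕ) ≠ 1 := fun h => hb (Fin.ext h)
          rw [hWzero b hb0 M (by omega) le_rfl (by
            rw [if_neg hb1]
            have := b.isLt
            omega), mul_zero]
      · intro h; exact absurd (Finset.mem_univ _) h
    -- a i = 0 for 2 ≤ i
    have h2 : ∀ i : Fin M, 2 ≤ (i : ℕ) → a i = 0 := by
      intro i hi2
      have ki := key (i : ℕ)
      rw [Finset.sum_eq_single i] at ki
      · have hW : ∑ n : Fin M, A i n * rdstS M (i : ℕ) (n : ℕ) =
            Real.sqrt (2 / M) * ((M : ℝ) / 2) := by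
          have : ∀ n : Fin M, A i n * rdstS M (i : ℕ) (n : ℕ) =
              Real.sqrt (2 / M) * (rdstS M (i : ℕ) (n : ℕ) * rdstS M (i : ℕ) (n : ℕ)) := by
            intro n
            rw [hA, if_neg (by omega), if_neg (by omega)]
            ring
          rw [Finset.sum_congr rfl fun n _ => this n, ← Finset.mul_sum,
            Fin.sum_univ_eq_sum_range (fun n => rdstS M (i : ℕ) n * rdstS M (i : ℕ) n),
            rdst_sin_norm' (i : ℕ) (by omega) i.isLt]
        rw [hW] at ki
        have hWne : Real.sqrt (2 / M) * ((M : ℝ) / 2) ≠ 0 := by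
          have : (0:ℝ) < Real.sqrt (2 / M) := Real.sqrt_pos.mpr (by positivity)
          positivity
        exact (mul_eq_zero.mp ki).resolve_right hWne
      · intro b _ hb
        by_cases hb0 : (b : ℕ) = 0
        · have : b = ⟨0, by omega⟩ := Fin.ext hb0
          rw [this, h0, zero_mul]
        · rw [hWzero b hb0 (i : ℕ) (by omega) (le_of_lt i.isLt) (by
            by_cases hb1 : (b : ℕ) = 1
            · rw [if_pos hb1]
              have := i.isLt
              omega
            · rw [if_neg hb1]
              exact fun h => hb (Fin.ext h.symm)), mul_zero]
      · intro h; exact absurd (Finset.mem_univ _) h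
    funext i
    by_cases hi0 : (i : ℕ) = 0
    · have : i = ⟨0, by omega⟩ := Fin.ext hi0
      rw [this]; exact h0
    · by_cases hi1 : (i : ℕ) = 1
      · have : i = ⟨1, by omega⟩ := Fin.ext hi1
        rw [this]; exact h1
      · exact h2 i (by omega)
  have hU : IsUnit A := (Matrix.isUnit_iff_isUnit_det A).mpr (isUnit_iff_ne_zero.mpr hdet)
  rw [Matrix.rank_of_isUnit A hU]
  simp
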